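/- Let 0 < κ < 1 and c₁, c₂ > 0, and let g : ℝ → ℝ satisfy c₁|s|^κ ≤ |g(s)| ≤ c₂|s|^κ and g(s)s ≥ 0 for all |s| < 1. Define φ(s) = c₁^{−2κ/(κ+1)}(1 + c₂²) s^{2κ/(κ+1)} for s ≥ 0. Then φ(g(s)·s) ≥ |g(s)|² + s² for all |s| < 1. -/
import Mathlib


open Real

theorem concave_majorant_sublinear
    (g : ℝ → ℝ) (κ c₁ c₂ : ℝ) (hκ0 : 0 < κ) (hκ1 : κ < 1) (hc₁ : 0 < c₁) (hc₂ : 0 < c₂)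
    (hsign : ∀ s : ℝ, |s| < 1 → 0 ≤ g s * s)
    (hlow : ∀ s : ℝ, |s| < 1 → c₁ * |s| ^ κ ≤ |g s|)
    (hup : ∀ s : ℝ, |s| < 1 → |g s| ≤ c₂ * |s| ^ κ) :
    ∀ s : ℝ, |s| < 1 →
      c₁ ^ (-(2 * κ / (κ + 1))) * (1 + c₂ ^ 2) * (g s * s) ^ (2 * κ / (κ + 1)) ≥
        |g s| ^ 2 + s ^ 2 := by
  intro s hs
  have hκ1' : (0:ℝ) < κ + 1 := by linarith
  have hθ : 0 < 2 * κ / (κ + 1) := by positivity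
  rcases eq_or_ne s 0 with rfl | hs0
  · have hg0 : g 0 = 0 := by
      have := hup 0 (by simp)
      have h0 : |(0:ℝ)| ^ κ = 0 := by
        simp [Real.zero_rpow (ne_of_gt hκ0)]
      rw [h0, mul_zero] at this
      exact abs_eq_zero.mp (le_antisymm this (abs_nonneg _))
    simp [hg0, Real.zero_rpow (ne_of_gt hθ)]
  · have habs : 0 < |s| := abs_pos.mpr hs0
    have habs1 : |s| ≤ 1 := le_of_lt hs
    -- g s * s = |g s| * |s|
    have h1 : g s * s = |g s| * |s| := by
      rw [← abs_mul]
      exact (abs_of_nonneg (hsign s hs)).symm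
    have hlow' := hlow s hs
    have h2 : c₁ * |s| ^ (κ + 1) ≤ g s * s := by
      rw [h1, Real.rpow_add habs, Real.rpow_one, ← mul_assoc]
      exact mul_le_mul_of_nonneg_right hlow' (le_of_lt habs)
    have h2pos : 0 < c₁ * |s| ^ (κ + 1) := by positivity
    have h3 : (c₁ * |s| ^ (κ + 1)) ^ (2 * κ / (κ + 1)) ≤ (g s * s) ^ (2 * κ / (κ + 1)) :=
      Real.rpow_le_rpow (le_of_lt h2pos) h2 (le_of_lt hθ)
    have h3' : (c₁ * |s| ^ (κ + 1)) ^ (2 * κ / (κ + 1))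
        = c₁ ^ (2 * κ / (κ + 1)) * |s| ^ (2 * κ) := by
      rw [Real.mul_rpow (le_of_lt hc₁) (by positivity), ← Real.rpow_mul (abs_nonneg s)]
      congr 1
      field_simp
    -- LHS ≥ (1 + c₂²) * |s|^(2κ)
    have hc1pow : 0 < c₁ ^ (2 * κ / (κ + 1)) := Real.rpow_pos_of_pos hc₁ _
    have hinv : c₁ ^ (-(2 * κ / (κ + 1))) * c₁ ^ (2 * κ / (κ + 1)) = 1 := by
      rw [← Real.rpow_add hc₁]; simp
    have hLHS : (1 + c₂ ^ 2) * |s| ^ (2 * κ) ≤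
        c₁ ^ (-(2 * κ / (κ + 1))) * (1 + c₂ ^ 2) * (g s * s) ^ (2 * κ / (κ + 1)) := by
      have hpos : 0 < c₁ ^ (-(2 * κ / (κ + 1))) := Real.rpow_pos_of_pos hc₁ _
      calc (1 + c₂ ^ 2) * |s| ^ (2 * κ)
          = c₁ ^ (-(2 * κ / (κ + 1))) * (1 + c₂ ^ 2) * (c₁ ^ (2 * κ / (κ + 1)) * |s| ^ (2 * κ)) := by
            rw [mul_comm (c₁ ^ (-(2 * κ / (κ + 1)))) (1 + c₂ ^ 2), mul_assoc, ← mul_assoc (c₁ ^ (-(2 * κ / (κ + 1)))), hinv, one_mul]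
        _ ≤ c₁ ^ (-(2 * κ / (κ + 1))) * (1 + c₂ ^ 2) * (g s * s) ^ (2 * κ / (κ + 1)) := by
            apply mul_le_mul_of_nonneg_left _ (by positivity)
            rw [← h3']; exact h3
    -- |g s|² ≤ c₂² |s|^(2κ)
    have h4 : |g s| ^ 2 ≤ c₂ ^ 2 * |s| ^ (2 * κ) := by
      have hup' := hup s hs
      have : |g s| ^ 2 ≤ (c₂ * |s| ^ κ) ^ 2 :=
        pow_le_pow_left₀ (abs_nonneg _) hup' 2
      calc |g s| ^ 2 ≤ (c₂ * |s| ^ κ) ^ 2 := this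
        _ = c₂ ^ 2 * |s| ^ (2 * κ) := by
            rw [mul_pow, ← Real.rpow_natCast (|s| ^ κ), ← Real.rpow_mul (abs_nonneg s)]
            norm_num [mul_comm]
    -- s² ≤ |s|^(2κ)
    have h5 : s ^ 2 ≤ |s| ^ (2 * κ) := by
      have : |s| ^ (2:ℝ) ≤ |s| ^ (2 * κ) :=
        Real.rpow_le_rpow_of_exponent_ge habs habs1 (by linarith)
      calc s ^ 2 = |s| ^ (2:ℝ) := by
            rw [Real.rpow_two, sq_abs]
        _ ≤ |s| ^ (2 * κ) := this
    nlinarith [hLHS, h4, h5]
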